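/- Let n ∈ ℕ, r ∈ ℕ with r ≥ 1, let f₁,…,f_r and g be real-valued functions on ℝ, each n times differentiable, and let c = (c₁,…,c_r) ∈ ℝ^r with c₁+⋯+c_r = 0. Then for every multi-index s = (s₁,…,s_r) of nonnegative integers with s₁+⋯+s_r = n, one has Σ_{k₁+⋯+k_r = n} (n!/(k₁!⋯k_r!)) · Π_{i=1}^r c_i^{k_i} · (f_i · g^{k_i})^{(s_i)} = n! · (Π_{i=1}^r c_i^{s_i}) · (Π_{i=1}^r f_i) · (g')^{n}. -/

import Mathlib

open scoped BigOperators
open Finset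

open scoped BigOperators
open Finset

lemma my_iteratedDeriv_add (m : ℕ) (φ ψ : ℝ → ℝ) (hφ : ContDiff ℝ (m : ℕ∞) φ)
    (hψ : ContDiff ℝ (m : ℕ∞) ψ) (x : ℝ) :
    iteratedDeriv m (fun t => φ t + ψ t) x = iteratedDeriv m φ x + iteratedDeriv m ψ x := by
  rw [← iteratedDerivWithin_univ, ← iteratedDerivWithin_univ, ← iteratedDerivWithin_univ]
  exact iteratedDerivWithin_add (Set.mem_univ x) uniqueDiffOn_univ
    hφ.contDiffWithinAt hψ.contDiffWithinAt

lemma my_iteratedDeriv_const_mul (m : ℕ) (a : ℝ) (φ : ℝ → ℝ) (hφ : ContDiff ℝ (m : ℕ∞) φ)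
    (x : ℝ) : iteratedDeriv m (fun t => a * φ t) x = a * iteratedDeriv m φ x := by
  rw [← iteratedDerivWithin_univ, ← iteratedDerivWithin_univ]
  exact iteratedDerivWithin_const_mul (Set.mem_univ x) uniqueDiffOn_univ a hφ.contDiffWithinAt

lemma my_iteratedDeriv_sum {ι : Type*} (u : Finset ι) (F : ι → ℝ → ℝ) (m : ℕ)
    (hF : ∀ i ∈ u, ContDiff ℝ (m : ℕ∞) (F i)) (x : ℝ) :
    iteratedDeriv m (fun t => ∑ i ∈ u, F i t) x = ∑ i ∈ u, iteratedDeriv m (F i) x := by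
  classical
  induction u using Finset.induction with
  | empty =>
    simp only [Finset.sum_empty]
    rw [iteratedDeriv_eq_iterate, Function.iterate_fixed]
    funext t; simp
  | insert _ _ ha ih =>
    rename_i a u
    rw [Finset.sum_insert ha]
    have h1 : ContDiff ℝ (m : ℕ∞) (F a) := hF a (Finset.mem_insert_self a u)
    have h2 : ContDiff ℝ (m : ℕ∞) (fun t => ∑ i ∈ u, F i t) :=
      ContDiff.sum fun i hi => hF i (Finset.mem_insert_of_mem hi)
    have := my_iteratedDeriv_add m (F a) (fun t => ∑ i ∈ u, F i t) h1 h2 x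
    simp only [Finset.sum_insert ha]
    rw [this, ih fun i hi => hF i (Finset.mem_insert_of_mem hi)]

lemma cd_deriv {m : ℕ} {f : ℝ → ℝ} (hf : ContDiff ℝ ((m+1 : ℕ) : ℕ∞) f) :
    ContDiff ℝ (m : ℕ∞) (deriv f) := by
  have : ContDiff ℝ ((m : ℕ∞) + 1) f := by exact_mod_cast hf
  exact (contDiff_succ_iff_deriv.mp (by exact_mod_cast this)).2.2

lemma cd_diff {m : ℕ} {f : ℝ → ℝ} (hf : ContDiff ℝ ((m+1 : ℕ) : ℕ∞) f) :
    Differentiable ℝ f :=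
  hf.differentiable (by simp)

lemma deriv_mul_pow (j : ℕ) (f h : ℝ → ℝ) (hf : Differentiable ℝ f)
    (hh : Differentiable ℝ h) :
    deriv (fun t => f t * h t ^ (j+1)) =
      fun t => (deriv f t * h t + ((j:ℝ)+1) * f t * deriv h t) * h t ^ j := by
  funext t
  rw [deriv_fun_mul (hf t) ((hh t).fun_pow _), deriv_fun_pow (hh t) _]
  simp only [Nat.add_sub_cancel]
  push_cast
  ring

lemma vanish (x : ℝ) : ∀ (m j : ℕ) (f h : ℝ → ℝ), m < j →
    ContDiff ℝ (m : ℕ∞) f → ContDiff ℝ (m : ℕ∞) h → h x = 0 →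
    iteratedDeriv m (fun t => f t * h t ^ j) x = 0 := by
  intro m
  induction m with
  | zero =>
    intro j f h hj hf hh hx
    rw [iteratedDeriv_zero]
    rw [hx, zero_pow (by omega), mul_zero]
  | succ m ih =>
    intro j f h hj hf hh hx
    obtain ⟨j, rfl⟩ : ∃ j', j = j' + 1 := ⟨j - 1, by omega⟩
    have hf1 : Differentiable ℝ f := cd_diff hf
    have hh1 : Differentiable ℝ h := cd_diff hh
    rw [iteratedDeriv_succ', deriv_mul_pow j f h hf1 hh1]
    have hf' : ContDiff ℝ (m : ℕ∞) (deriv f) := cd_deriv hf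
    have hh' : ContDiff ℝ (m : ℕ∞) (deriv h) := cd_deriv hh
    have hfm : ContDiff ℝ (m : ℕ∞) f := hf.of_le (by exact_mod_cast Nat.le_succ m)
    have hhm : ContDiff ℝ (m : ℕ∞) h := hh.of_le (by exact_mod_cast Nat.le_succ m)
    exact ih j (fun t => deriv f t * h t + ((j:ℝ)+1) * f t * deriv h t) h (by omega)
      ((hf'.mul hhm).add ((contDiff_const.mul hfm).mul hh')) hhm hx

lemma keyval (x : ℝ) : ∀ (m : ℕ) (f h : ℝ → ℝ),
    ContDiff ℝ (m : ℕ∞) f → ContDiff ℝ (m : ℕ∞) h → h x = 0 →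
    iteratedDeriv m (fun t => f t * h t ^ m) x
      = (m.factorial : ℝ) * f x * (deriv h x) ^ m := by
  intro m
  induction m with
  | zero => intro f h hf hh hx; simp [iteratedDeriv_zero]
  | succ m ih =>
    intro f h hf hh hx
    have hf1 : Differentiable ℝ f := cd_diff hf
    have hh1 : Differentiable ℝ h := cd_diff hh
    rw [iteratedDeriv_succ', deriv_mul_pow m f h hf1 hh1]
    have hf' : ContDiff ℝ (m : ℕ∞) (deriv f) := cd_deriv hf
    have hh' : ContDiff ℝ (m : ℕ∞) (deriv h) := cd_deriv hh
    have hfm : ContDiff ℝ (m : ℕ∞) f := hf.of_le (by exact_mod_cast Nat.le_succ m)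
    have hhm : ContDiff ℝ (m : ℕ∞) h := hh.of_le (by exact_mod_cast Nat.le_succ m)
    rw [ih (fun t => deriv f t * h t + ((m:ℝ)+1) * f t * deriv h t) h
      ((hf'.mul hhm).add ((contDiff_const.mul hfm).mul hh')) hhm hx]
    rw [hx]
    rw [Nat.factorial_succ]
    push_cast
    ring

lemma expand_lemma (n k m : ℕ) (hk : k ≤ n) (hm : m ≤ n) (f g : ℝ → ℝ)
    (hf : ContDiff ℝ (n : ℕ∞) f) (hg : ContDiff ℝ (n : ℕ∞) g) (x : ℝ) :
    iteratedDeriv m (fun t => f t * g t ^ k) x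
      = ∑ j ∈ range (n+1), (k.choose j : ℝ) * (g x) ^ (k-j) *
          iteratedDeriv m (fun t => f t * (g t - g x) ^ j) x := by
  have hfm : ContDiff ℝ (m : ℕ∞) f := hf.of_le (by exact_mod_cast hm)
  have hgm : ContDiff ℝ (m : ℕ∞) g := hg.of_le (by exact_mod_cast hm)
  have hsummand : ∀ j : ℕ, ContDiff ℝ (m : ℕ∞)
      (fun t => (k.choose j : ℝ) * (g x) ^ (k-j) * (f t * (g t - g x) ^ j)) := by
    intro j
    exact contDiff_const.mul (hfm.mul ((hgm.sub contDiff_const).pow j))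
  have hfun : (fun t => f t * g t ^ k)
      = fun t => ∑ j ∈ range (k+1),
          (k.choose j : ℝ) * (g x) ^ (k-j) * (f t * (g t - g x) ^ j) := by
    funext t
    have h1 : g t = (g t - g x) + g x := by ring
    calc f t * g t ^ k = f t * ((g t - g x) + g x) ^ k := by rw [← h1]
      _ = ∑ j ∈ range (k+1),
          (k.choose j : ℝ) * (g x) ^ (k-j) * (f t * (g t - g x) ^ j) := by
          rw [add_pow, mul_sum]
          exact sum_congr rfl fun j hj => by ring
  rw [hfun, my_iteratedDeriv_sum _ _ m (fun j _ => hsummand j) x]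
  rw [← sum_subset (range_subset_range.mpr (by omega) : range (k+1) ⊆ range (n+1))]
  · exact sum_congr rfl fun j _ => by
      rw [my_iteratedDeriv_const_mul m _ _ (hfm.mul ((hgm.sub contDiff_const).pow j)) x]
  · intro j hj hj'
    rw [mem_range] at hj'
    have : k.choose j = 0 := Nat.choose_eq_zero_of_lt (by omega)
    simp [this]

lemma multinomial_thm (r N : ℕ) (d : Fin r → ℝ) :
    (∑ i, d i) ^ N = ∑ l ∈ Finset.Nat.antidiagonalTuple r N,
      (Nat.multinomial univ l : ℝ) * ∏ i, d i ^ (l i) := by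
  rw [← Finset.piAntidiag_univ_fin_eq_antidiagonalTuple N r]
  exact Finset.sum_pow_eq_sum_piAntidiag univ d N

lemma coeff_nat (r : ℕ) (p l : Fin r → ℕ) :
    Nat.multinomial univ (fun i => p i + l i) * ∏ i : Fin r, (p i + l i).choose (p i)
      = ((∑ i, p i) + (∑ i, l i)).choose (∑ i, p i)
          * Nat.multinomial univ p * Nat.multinomial univ l := by
  have hpos : 0 < (∏ i : Fin r, (p i).factorial) * (∏ i : Fin r, (l i).factorial) :=
    Nat.mul_pos (prod_pos fun i _ => Nat.factorial_pos _) (prod_pos fun i _ => Nat.factorial_pos _)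
  apply Nat.eq_of_mul_eq_mul_right hpos
  have h1 : (Nat.multinomial univ (fun i => p i + l i) * ∏ i : Fin r, (p i + l i).choose (p i))
      * ((∏ i : Fin r, (p i).factorial) * (∏ i : Fin r, (l i).factorial))
      = Nat.multinomial univ (fun i => p i + l i) * ∏ i : Fin r, (p i + l i).factorial := by
    rw [mul_assoc]
    congr 1
    rw [← prod_mul_distrib, ← prod_mul_distrib]
    exact prod_congr rfl fun i _ => by
      rw [← mul_assoc, Nat.choose_symm_add]
      exact Nat.add_choose_mul_factorial_mul_factorial (p i) (l i)
  rw [h1, mul_comm (Nat.multinomial univ fun i => p i + l i),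
    Nat.multinomial_spec]
  have h2 : (((∑ i, p i) + (∑ i, l i)).choose (∑ i, p i) * Nat.multinomial univ p
      * Nat.multinomial univ l)
      * ((∏ i : Fin r, (p i).factorial) * (∏ i : Fin r, (l i).factorial))
      = ((∑ i, p i) + (∑ i, l i)).choose (∑ i, p i) * (∑ i, p i).factorial
          * (∑ i, l i).factorial := by
    have hp := Nat.multinomial_spec univ p
    have hl := Nat.multinomial_spec univ l
    calc (((∑ i, p i) + (∑ i, l i)).choose (∑ i, p i) * Nat.multinomial univ p
        * Nat.multinomial univ l)
        * ((∏ i : Fin r, (p i).factorial) * (∏ i : Fin r, (l i).factorial))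
        = ((∑ i, p i) + (∑ i, l i)).choose (∑ i, p i)
            * ((∏ i : Fin r, (p i).factorial) * Nat.multinomial univ p)
            * ((∏ i : Fin r, (l i).factorial) * Nat.multinomial univ l) := by ring
      _ = _ := by rw [hp, hl]
  rw [h2, Nat.choose_symm_add, Nat.add_choose_mul_factorial_mul_factorial]
  congr 1
  rw [← Finset.sum_add_distrib]

lemma comb (n r : ℕ) (p : Fin r → ℕ) (hp : ∑ i, p i ≤ n) (c : Fin r → ℝ) (a : ℝ) :
    ∑ k ∈ Finset.Nat.antidiagonalTuple r n,
      (Nat.multinomial univ k : ℝ) *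
        ∏ i, (((k i).choose (p i) : ℝ) * c i ^ (k i) * a ^ (k i - p i))
      = (n.choose (∑ i, p i) : ℝ) * (Nat.multinomial univ p : ℝ) *
          (∏ i, c i ^ p i) * (∑ i, c i * a) ^ (n - ∑ i, p i) := by
  classical
  set m := ∑ i, p i with hm
  rw [← Finset.sum_filter_of_ne (p := fun k : Fin r → ℕ => ∀ i, p i ≤ k i)
    (fun k hk hne => by
      by_contra hcon
      rw [not_forall] at hcon
      obtain ⟨i, hi⟩ := hcon
      rw [not_le] at hi
      apply hne
      have hz : ((k i).choose (p i) : ℝ) * c i ^ (k i) * a ^ (k i - p i) = 0 := by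
        rw [Nat.choose_eq_zero_of_lt hi]; norm_num
      rw [Finset.prod_eq_zero (mem_univ i) hz, mul_zero])]
  have step : ∑ k ∈ (Finset.Nat.antidiagonalTuple r n).filter (fun k => ∀ i, p i ≤ k i),
      (Nat.multinomial univ k : ℝ) *
        ∏ i, (((k i).choose (p i) : ℝ) * c i ^ (k i) * a ^ (k i - p i))
      = ∑ l ∈ Finset.Nat.antidiagonalTuple r (n - m),
      (Nat.multinomial univ (fun i => p i + l i) : ℝ) *
        ∏ i, (((p i + l i).choose (p i) : ℝ) * c i ^ (p i + l i) * a ^ (l i)) := by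
    refine Finset.sum_bij' (fun k _ => fun i => k i - p i) (fun l _ => fun i => p i + l i)
      ?_ ?_ ?_ ?_ ?_
    · intro k hk
      rw [Finset.mem_filter, Finset.Nat.mem_antidiagonalTuple] at hk
      rw [Finset.Nat.mem_antidiagonalTuple]
      rw [Finset.sum_tsub_distrib _ (fun i _ => hk.2 i), hk.1]
    · intro l hl
      rw [Finset.Nat.mem_antidiagonalTuple] at hl
      rw [Finset.mem_filter, Finset.Nat.mem_antidiagonalTuple]
      refine ⟨?_, fun i => Nat.le_add_right _ _⟩
      rw [Finset.sum_add_distrib, hl, ← hm]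
      omega
    · intro k hk
      rw [Finset.mem_filter] at hk
      funext i
      exact Nat.add_sub_cancel' (hk.2 i)
    · intro l hl
      funext i
      exact Nat.add_sub_cancel_left _ _
    · intro k hk
      rw [Finset.mem_filter] at hk
      have hki : ∀ i, p i + (k i - p i) = k i := fun i => Nat.add_sub_cancel' (hk.2 i)
      simp only [hki]
  rw [step]
  have hterm : ∀ l ∈ Finset.Nat.antidiagonalTuple r (n - m),
      (Nat.multinomial univ (fun i => p i + l i) : ℝ) *
        ∏ i, (((p i + l i).choose (p i) : ℝ) * c i ^ (p i + l i) * a ^ (l i))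
      = ((n.choose m : ℝ) * (Nat.multinomial univ p : ℝ) * ∏ i, c i ^ p i) *
          ((Nat.multinomial univ l : ℝ) * ∏ i, (c i * a) ^ (l i)) := by
    intro l hl
    rw [Finset.Nat.mem_antidiagonalTuple] at hl
    have hcoeff := coeff_nat r p l
    have hcoeffR := congrArg (fun t : ℕ => (t : ℝ)) hcoeff
    push_cast at hcoeffR
    rw [hl, ← hm, Nat.add_sub_cancel' hp] at hcoeffR
    have hsplit : ∏ i, (((p i + l i).choose (p i) : ℝ) * c i ^ (p i + l i) * a ^ (l i))
        = (∏ i, ((p i + l i).choose (p i) : ℝ)) * ((∏ i, c i ^ p i)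
            * (∏ i, (c i * a) ^ (l i))) := by
      rw [← Finset.prod_mul_distrib, ← Finset.prod_mul_distrib]
      exact Finset.prod_congr rfl fun i _ => by rw [pow_add, mul_pow]; ring
    rw [hsplit]
    linear_combination ((∏ i, c i ^ p i) * ∏ i, (c i * a) ^ (l i)) * hcoeffR
  rw [Finset.sum_congr rfl hterm, ← Finset.mul_sum, ← multinomial_thm]

theorem stmt_2 (n r : ℕ) (hr : 1 ≤ r)
    (f : Fin r → ℝ → ℝ) (g : ℝ → ℝ)
    (hf : ∀ i, ContDiff ℝ (n : ℕ∞) (f i))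
    (hg : ContDiff ℝ (n : ℕ∞) g)
    (c : Fin r → ℝ) (hc : ∑ i, c i = 0)
    (s : Fin r → ℕ) (hs : ∑ i, s i = n) (x : ℝ) :
    ∑ k ∈ Finset.Nat.antidiagonalTuple r n,
      (Nat.multinomial Finset.univ k : ℝ) *
        ∏ i, (c i) ^ (k i) * iteratedDeriv (s i) (fun t => f i t * (g t) ^ (k i)) x
      = (n.factorial : ℝ) * (∏ i, (c i) ^ (s i)) * (∏ i, f i x) * (deriv g x) ^ n := by
  classical
  have hsle : ∀ i, s i ≤ n := by
    intro i
    calc s i ≤ ∑ j, s j := Finset.single_le_sum (fun j _ => Nat.zero_le _) (mem_univ i)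
      _ = n := hs
  set a := g x with ha
  have hh : ContDiff ℝ (n : ℕ∞) (fun t => g t - a) := hg.sub contDiff_const
  have hhx : g x - a = 0 := sub_self a
  set D : Fin r → ℕ → ℝ :=
    fun i j => iteratedDeriv (s i) (fun t => f i t * (g t - a) ^ j) x with hD
  have step1 : ∀ k ∈ Finset.Nat.antidiagonalTuple r n,
      (Nat.multinomial Finset.univ k : ℝ) *
        ∏ i, (c i) ^ (k i) * iteratedDeriv (s i) (fun t => f i t * (g t) ^ (k i)) x
      = ∑ q ∈ Fintype.piFinset (fun _ : Fin r => range (n+1)),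
          ((Nat.multinomial univ k : ℝ) *
            ∏ i, (((k i).choose (q i) : ℝ) * c i ^ (k i) * a ^ (k i - q i))) *
          ∏ i, D i (q i) := by
    intro k hk
    rw [Finset.Nat.mem_antidiagonalTuple] at hk
    have hkle : ∀ i, k i ≤ n := by
      intro i
      calc k i ≤ ∑ j, k j := Finset.single_le_sum (fun j _ => Nat.zero_le _) (mem_univ i)
        _ = n := hk
    have hinner : ∀ i : Fin r,
        (c i) ^ (k i) * iteratedDeriv (s i) (fun t => f i t * (g t) ^ (k i)) x
        = ∑ j ∈ range (n+1), (((k i).choose j : ℝ) * c i ^ (k i) * a ^ (k i - j)) * D i j := by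
      intro i
      rw [expand_lemma n (k i) (s i) (hkle i) (hsle i) (f i) g (hf i) hg x, Finset.mul_sum]
      refine sum_congr rfl fun j _ => ?_
      rw [← ha, hD]
      ring
    rw [Finset.prod_congr rfl fun i _ => hinner i, Finset.prod_univ_sum, Finset.mul_sum]
    exact sum_congr rfl fun q _ => by rw [Finset.prod_mul_distrib, mul_assoc]
  rw [Finset.sum_congr rfl step1, Finset.sum_comm]
  have hsmem : s ∈ Fintype.piFinset (fun _ : Fin r => range (n+1)) :=
    Fintype.mem_piFinset.mpr fun i => mem_range.mpr (Nat.lt_succ_of_le (hsle i))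
  rw [Finset.sum_eq_single_of_mem s hsmem]
  · -- the q = s term
    rw [← Finset.sum_mul, comb n r s (le_of_eq hs) c a, hs]
    have hca : ∑ i, c i * a = 0 := by rw [← Finset.sum_mul, hc, zero_mul]
    rw [hca, Nat.sub_self, pow_zero, Nat.choose_self]
    have hDval : ∀ i : Fin r, D i (s i)
        = ((s i).factorial : ℝ) * f i x * (deriv g x) ^ (s i) := by
      intro i
      have hkv : iteratedDeriv (s i) (fun t => f i t * (g t - a) ^ (s i)) x
          = ((s i).factorial : ℝ) * f i x * (deriv (fun t => g t - a) x) ^ (s i) :=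
        keyval x (s i) (f i) (fun t => g t - a)
          ((hf i).of_le (by exact_mod_cast hsle i))
          (hh.of_le (by exact_mod_cast hsle i)) hhx
      simp only [hD]
      rw [hkv, deriv_sub_const]
    rw [Finset.prod_congr rfl fun i _ => hDval i]
    rw [Finset.prod_mul_distrib, Finset.prod_mul_distrib, Finset.prod_pow_eq_pow_sum, hs]
    have hspec := congrArg (fun t : ℕ => (t : ℝ)) (Nat.multinomial_spec univ s)
    push_cast at hspec
    rw [hs] at hspec
    linear_combination ((∏ i, c i ^ s i) * (∏ i, f i x) * (deriv g x) ^ n) * hspec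
  · -- other q give zero
    intro q hq hne
    by_cases hex : ∃ i, s i < q i
    · obtain ⟨i, hi⟩ := hex
      have hDz : D i (q i) = 0 := by
        rw [hD]
        exact vanish x (s i) (q i) (f i) (fun t => g t - a) hi
          ((hf i).of_le (by exact_mod_cast hsle i))
          (hh.of_le (by exact_mod_cast hsle i)) hhx
      rw [Finset.prod_eq_zero (mem_univ i) hDz]
      simp
    · push_neg at hex
      have hqlt : ∑ i, q i < n := by
        rw [← hs]
        refine Finset.sum_lt_sum (fun i _ => hex i) ?_
        obtain ⟨i, hi⟩ := Function.ne_iff.mp hne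
        exact ⟨i, mem_univ i, lt_of_le_of_ne (hex i) hi⟩
      rw [← Finset.sum_mul, comb n r q (le_of_lt hqlt) c a]
      have hca : ∑ i, c i * a = 0 := by rw [← Finset.sum_mul, hc, zero_mul]
      rw [hca, zero_pow (by omega), mul_zero, zero_mul]
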